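/- Let G be an n-vertex Class 2 graph with a full-deficiency pair (a,b) (adjacent vertices with d_G(a) + d_G(b) = Δ + 2) such that ab is a critical edge. Then every vertex x ∈ (N_G(a) ∪ N_G(b)) \ {a,b} has degree Δ. -/

import Mathlib

open SimpleGraph

/-- A proper `k`-edge-coloring of `G` with colors in `{1,…,k}`: every edge receives a color
in `{1,…,k}` and distinct edges sharing a vertex receive distinct colors. -/
def IsProperEdgeColoring {V : Type*} (G : SimpleGraph V) (k : ℕ) (c : Sym2 V → ℕ) : Prop :=
  (∀ e ∈ G.edgeSet, c e ∈ Finset.Icc 1 k) ∧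
  ∀ e ∈ G.edgeSet, ∀ f ∈ G.edgeSet, e ≠ f → (∃ v, v ∈ e ∧ v ∈ f) → c e ≠ c f

/-- `G` admits a proper `k`-edge-coloring. -/
def EdgeColorable {V : Type*} (G : SimpleGraph V) (k : ℕ) : Prop :=
  ∃ c, IsProperEdgeColoring G k c

/-- The chromatic index of `G`: the least `k` such that `G` is `k`-edge-colorable. -/
noncomputable def chromIndex {V : Type*} (G : SimpleGraph V) : ℕ :=
  sInf {k | EdgeColorable G k}

namespace Stmt10

variable {V : Type*}

/-- The set of colors present at a vertex. -/
def pres (H : SimpleGraph V) (c : Sym2 V → ℕ) (v : V) : Set ℕ :=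
  {n | ∃ w, H.Adj v w ∧ c s(v, w) = n}

lemma pres_mono {H K : SimpleGraph V} (h : K ≤ H) (c : Sym2 V → ℕ) (v : V) :
    pres K c v ⊆ pres H c v := by
  rintro n ⟨w, hw, he⟩
  exact ⟨w, h hw, he⟩

lemma pres_subset_Icc {H : SimpleGraph V} {k : ℕ} {c : Sym2 V → ℕ}
    (hc : IsProperEdgeColoring H k c) (v : V) :
    pres H c v ⊆ (Finset.Icc 1 k : Finset ℕ) := by
  rintro n ⟨w, hw, he⟩
  exact he ▸ hc.1 _ (by rwa [mem_edgeSet])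

lemma proper_anti {H K : SimpleGraph V} (h : K ≤ H) {k : ℕ} {c : Sym2 V → ℕ}
    (hc : IsProperEdgeColoring H k c) : IsProperEdgeColoring K k c := by
  have hsub : K.edgeSet ⊆ H.edgeSet := edgeSet_mono h
  exact ⟨fun e he => hc.1 e (hsub he),
    fun e he f hf hne hsh => hc.2 e (hsub he) f (hsub hf) hne hsh⟩

lemma exists_other {H : SimpleGraph V} {e : Sym2 V} {v : V} (he : e ∈ H.edgeSet) (hv : v ∈ e) :
    ∃ w, H.Adj v w ∧ e = s(v, w) := by
  induction e with
  | _ u w =>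
    rw [Sym2.mem_iff] at hv
    rw [mem_edgeSet] at he
    rcases hv with rfl | rfl
    · exact ⟨w, he, rfl⟩
    · exact ⟨u, he.symm, Sym2.eq_swap⟩

lemma injOn_color {H : SimpleGraph V} {k : ℕ} {c : Sym2 V → ℕ}
    (hc : IsProperEdgeColoring H k c) (v : V) :
    Set.InjOn (fun w => c s(v, w)) {w | H.Adj v w} := by
  intro w hw w' hw' heq
  by_contra hne
  have hedne : s(v, w) ≠ s(v, w') := fun h => hne ((Sym2.congr_right).mp h)
  exact hc.2 _ ((H.mem_edgeSet).mpr hw) _ ((H.mem_edgeSet).mpr hw') hedne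
    ⟨v, Sym2.mem_mk_left _ _, Sym2.mem_mk_left _ _⟩ heq

/-- Recoloring an absent edge with a color missing at both endpoints keeps things proper. -/
lemma proper_update_of_notMem [DecidableEq V] {H : SimpleGraph V} {k : ℕ} {c : Sym2 V → ℕ} {u v : V}
    (huv : H.Adj u v) (hc : IsProperEdgeColoring (H.deleteEdges {s(u, v)}) k c)
    {γ : ℕ} (hγ : γ ∈ Finset.Icc 1 k)
    (hu : γ ∉ pres (H.deleteEdges {s(u, v)}) c u)
    (hv : γ ∉ pres (H.deleteEdges {s(u, v)}) c v) :
    IsProperEdgeColoring H k (Function.update c s(u, v) γ) := by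
  classical
  set H' := H.deleteEdges {s(u, v)} with hH'
  have hE : H'.edgeSet = H.edgeSet \ {s(u, v)} := edgeSet_deleteEdges _
  have hmem : ∀ e ∈ H.edgeSet, e ≠ s(u, v) → e ∈ H'.edgeSet := by
    intro e he hne; rw [hE]; exact ⟨he, hne⟩
  constructor
  · intro e he
    by_cases h : e = s(u, v)
    · subst h; rw [Function.update_self]; exact hγ
    · rw [Function.update_of_ne h]; exact hc.1 e (hmem e he h)
  · have main : ∀ f ∈ H.edgeSet, f ≠ s(u, v) → (∃ t, t ∈ s(u, v) ∧ t ∈ f) →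
        Function.update c s(u, v) γ s(u, v) ≠ Function.update c s(u, v) γ f := by
      intro f hf hfne ⟨t, htuv, htf⟩
      rw [Function.update_self, Function.update_of_ne hfne]
      have hf' : f ∈ H'.edgeSet := hmem f hf hfne
      obtain ⟨w, hw, rfl⟩ := exists_other hf' htf
      have : c s(t, w) ∈ pres H' c t := ⟨w, hw, rfl⟩
      rw [Sym2.mem_iff] at htuv
      rcases htuv with rfl | rfl
      · exact fun h => hu (h ▸ this)
      · exact fun h => hv (h ▸ this)
    intro e he f hf hne hsh
    by_cases heu : e = s(u, v)
    · subst heu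
      exact main f hf (fun h => hne h.symm) hsh
    · by_cases hfu : f = s(u, v)
      · subst hfu
        obtain ⟨t, ht1, ht2⟩ := hsh
        exact (main e he heu ⟨t, ht2, ht1⟩).symm
      · rw [Function.update_of_ne heu, Function.update_of_ne hfu]
        exact hc.2 e (hmem e he heu) f (hmem f hf hfu) hne hsh

/-- The present set is unchanged at vertices away from the recolored edge. -/
lemma pres_update_of_ne [DecidableEq V] {H : SimpleGraph V} {c : Sym2 V → ℕ} {u v t : V} {γ : ℕ}
    (htu : t ≠ u) (htv : t ≠ v) :
    pres H (Function.update c s(u, v) γ) t = pres H c t := by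
  classical
  ext n
  constructor <;> rintro ⟨w, hw, he⟩ <;> refine ⟨w, hw, ?_⟩
  · rwa [Function.update_of_ne (fun h => by
      rcases Sym2.eq_iff.mp h with ⟨rfl, rfl⟩ | ⟨rfl, rfl⟩ <;> simp at htu htv)] at he
  · rwa [Function.update_of_ne (fun h => by
      rcases Sym2.eq_iff.mp h with ⟨rfl, rfl⟩ | ⟨rfl, rfl⟩ <;> simp at htu htv)]

/-- After recoloring edge `uv` with a color missing at `u`, the old color of `uv`
is missing at `u`. -/
lemma old_color_notMem [DecidableEq V] {H : SimpleGraph V} {k : ℕ} {c : Sym2 V → ℕ} {u v : V} {γ : ℕ}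
    (hc : IsProperEdgeColoring H k c) (huv : H.Adj u v) (hu : γ ∉ pres H c u) :
    c s(u, v) ∉ pres H (Function.update c s(u, v) γ) u := by
  classical
  rintro ⟨w, hw, he⟩
  by_cases hwv : w = v
  · subst hwv
    rw [Function.update_self] at he
    exact hu (he ▸ ⟨w, hw, rfl⟩)
  · have hne : s(u, w) ≠ s(u, v) := fun h => hwv (Sym2.congr_right.mp h)
    rw [Function.update_of_ne hne] at he
    exact hc.2 _ ((H.mem_edgeSet).mpr hw) _ ((H.mem_edgeSet).mpr huv) hne
      ⟨u, Sym2.mem_mk_left _ _, Sym2.mem_mk_left _ _⟩ he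

lemma edgeColorable_mono {H : SimpleGraph V} {k l : ℕ} (h : k ≤ l)
    (hc : EdgeColorable H k) : EdgeColorable H l := by
  obtain ⟨c, hc1, hc2⟩ := hc
  refine ⟨c, fun e he => ?_, hc2⟩
  have := hc1 e he
  rw [Finset.mem_Icc] at this ⊢
  omega

lemma edgeColorable_exists [Fintype V] (H : SimpleGraph V) : ∃ n, EdgeColorable H n := by
  classical
  refine ⟨Fintype.card (Sym2 V), fun e => ((Fintype.equivFin (Sym2 V)) e).val + 1, ?_, ?_⟩
  · intro e _
    exact Finset.mem_Icc.mpr ⟨Nat.le_add_left 1 _,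
      Nat.succ_le_of_lt ((Fintype.equivFin (Sym2 V)) e).isLt⟩
  · intro e _ f _ hne _
    simp only [ne_eq, add_left_inj]
    exact fun h => hne ((Fintype.equivFin (Sym2 V)).injective (Fin.ext h))


/-- Swap two colors. -/
def swapC (α γ n : ℕ) : ℕ := if n = α then γ else if n = γ then α else n

lemma swapC_left {α γ : ℕ} : swapC α γ α = γ := by simp [swapC]

lemma swapC_right {α γ : ℕ} (h : α ≠ γ) : swapC α γ γ = α := by
  simp [swapC, Ne.symm h]

lemma swapC_other {α γ n : ℕ} (h1 : n ≠ α) (h2 : n ≠ γ) : swapC α γ n = n := by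
  simp [swapC, h1, h2]

lemma swapC_invol {α γ : ℕ} (h : α ≠ γ) : Function.Involutive (swapC α γ) := by
  intro n
  by_cases h1 : n = α
  · subst h1; rw [swapC_left, swapC_right h]
  · by_cases h2 : n = γ
    · subst h2; rw [swapC_right h, swapC_left]
    · rw [swapC_other h1 h2, swapC_other h1 h2]

/-- The Kempe subgraph consisting of edges colored `α` or `γ`. -/
def kempeGraph (H : SimpleGraph V) (c : Sym2 V → ℕ) (α γ : ℕ) : SimpleGraph V where
  Adj u v := H.Adj u v ∧ (c s(u, v) = α ∨ c s(u, v) = γ)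
  symm := by
    constructor
    intro u v ⟨h1, h2⟩
    refine ⟨h1.symm, ?_⟩
    rwa [Sym2.eq_swap] at h2
  loopless := ⟨fun v h => H.loopless.irrefl v h.1⟩

lemma kempe_swap (H : SimpleGraph V) {k : ℕ} {c : Sym2 V → ℕ}
    (hc : IsProperEdgeColoring H k c) {α γ : ℕ} (hne : α ≠ γ)
    (hα : α ∈ Finset.Icc 1 k) (hγ : γ ∈ Finset.Icc 1 k) (x₀ : V) :
    ∃ c', IsProperEdgeColoring H k c' ∧
      (∀ e, c e ≠ α → c e ≠ γ → c' e = c e) ∧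
      (∀ v, (kempeGraph H c α γ).Reachable x₀ v →
        ∀ n, (n ∈ pres H c' v ↔ swapC α γ n ∈ pres H c v)) ∧
      (∀ v, ¬ (kempeGraph H c α γ).Reachable x₀ v → pres H c' v = pres H c v) := by
  classical
  set K := kempeGraph H c α γ with hK
  set P : V → Prop := fun v => K.Reachable x₀ v with hP
  set c' : Sym2 V → ℕ := fun e =>
    if (c e = α ∨ c e = γ) ∧ (∃ u ∈ e, P u) ∧ e ∈ H.edgeSet then swapC α γ (c e) else c e
    with hc'
  -- key uniformity: at an edge containing `t`, the new color is determined by `P t`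
  have hkey : ∀ e ∈ H.edgeSet, ∀ t ∈ e,
      (P t → c' e = swapC α γ (c e)) ∧ (¬ P t → c' e = c e) := by
    intro e he t hte
    by_cases hcol : c e = α ∨ c e = γ
    · -- `e` is a Kempe edge; its endpoints are `K`-adjacent
      obtain ⟨w, hw, rfl⟩ := exists_other he hte
      have hKadj : K.Adj t w := ⟨hw, hcol⟩
      constructor
      · intro hPt
        show (if _ then _ else _) = _
        exact if_pos ⟨hcol, ⟨t, hte, hPt⟩, he⟩
      · intro hPt
        rw [hc']
        refine if_neg ?_
        rintro ⟨-, ⟨u, hu, hPu⟩, -⟩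
        rw [Sym2.mem_iff] at hu
        rcases hu with rfl | rfl
        · exact hPt hPu
        · exact hPt (hPu.trans ⟨(SimpleGraph.Walk.cons hKadj SimpleGraph.Walk.nil).reverse⟩)
    · push_neg at hcol
      have : c' e = c e := by rw [hc']; exact if_neg (fun h => (not_or.mpr hcol) h.1)
      exact ⟨fun _ => this.trans (swapC_other hcol.1 hcol.2).symm, fun _ => this⟩
  have hinj := (swapC_invol hne).injective
  refine ⟨c', ⟨?_, ?_⟩, ?_, ?_, ?_⟩
  · -- colors in range
    intro e he
    by_cases hcol : (c e = α ∨ c e = γ) ∧ (∃ u ∈ e, P u) ∧ e ∈ H.edgeSet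
    · rw [hc']
      simp only [if_pos hcol]
      rcases hcol.1 with h | h <;> rw [h]
      · rw [swapC_left]; exact hγ
      · rw [swapC_right hne]; exact hα
    · rw [hc']
      simp only [if_neg hcol]
      exact hc.1 e he
  · -- properness
    intro e he f hf hnef ⟨t, hte, htf⟩
    by_cases hPt : P t
    · rw [(hkey e he t hte).1 hPt, (hkey f hf t htf).1 hPt]
      exact fun h => hc.2 e he f hf hnef ⟨t, hte, htf⟩ (hinj h)
    · rw [(hkey e he t hte).2 hPt, (hkey f hf t htf).2 hPt]
      exact hc.2 e he f hf hnef ⟨t, hte, htf⟩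
  · -- unchanged colors
    intro e h1 h2
    rw [hc']
    exact if_neg (fun h => by rcases h.1 with h' | h' <;> [exact h1 h'; exact h2 h'])
  · -- present sets at reachable vertices
    intro v hPv n
    constructor
    · rintro ⟨w, hw, hce⟩
      refine ⟨w, hw, ?_⟩
      have := (hkey s(v, w) ((H.mem_edgeSet).mpr hw) v (Sym2.mem_mk_left _ _)).1 hPv
      rw [this] at hce
      rw [← hce, swapC_invol hne]
    · rintro ⟨w, hw, hce⟩
      refine ⟨w, hw, ?_⟩
      have := (hkey s(v, w) ((H.mem_edgeSet).mpr hw) v (Sym2.mem_mk_left _ _)).1 hPv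
      rw [this, hce, swapC_invol hne]
  · -- present sets at unreachable vertices
    intro v hPv
    ext n
    constructor <;> rintro ⟨w, hw, hce⟩ <;> refine ⟨w, hw, ?_⟩
    · rw [← hce, ((hkey s(v, w) ((H.mem_edgeSet).mpr hw) v (Sym2.mem_mk_left _ _)).2 hPv)]
    · rw [((hkey s(v, w) ((H.mem_edgeSet).mpr hw) v (Sym2.mem_mk_left _ _)).2 hPv), hce]


lemma degree_bounds [Fintype V] {H : SimpleGraph V} {k : ℕ} {c : Sym2 V → ℕ}
    (hc : IsProperEdgeColoring H k c) {α γ : ℕ}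
    (K : SimpleGraph V) [DecidableRel K.Adj]
    (hK : ∀ u w, K.Adj u w → H.Adj u w ∧ (c s(u, w) = α ∨ c s(u, w) = γ)) (v : V) :
    K.degree v ≤ 2 ∧ (α ∉ pres H c v → K.degree v ≤ 1) ∧
      (γ ∉ pres H c v → K.degree v ≤ 1) := by
  classical
  have hKH : ∀ w ∈ K.neighborFinset v, H.Adj v w := by
    intro w hw
    exact (hK v w ((K.mem_neighborFinset v w).mp hw)).1
  have hinj : Set.InjOn (fun w => c s(v, w)) (K.neighborFinset v : Set V) := by
    intro w hw w' hw' heq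
    exact injOn_color hc v (hKH w (by simpa using hw)) (hKH w' (by simpa using hw')) heq
  have hcard : K.degree v = ((K.neighborFinset v).image (fun w => c s(v, w))).card := by
    rw [Finset.card_image_of_injOn hinj]
    rfl
  have hsub : (K.neighborFinset v).image (fun w => c s(v, w)) ⊆ ({α, γ} : Finset ℕ) := by
    intro n hn
    rw [Finset.mem_image] at hn
    obtain ⟨w, hw, rfl⟩ := hn
    have := (hK v w ((K.mem_neighborFinset v w).mp hw)).2
    simpa using this
  refine ⟨?_, ?_, ?_⟩
  · rw [hcard]
    calc ((K.neighborFinset v).image _).card ≤ ({α, γ} : Finset ℕ).card :=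
          Finset.card_le_card hsub
      _ ≤ 2 := Finset.card_insert_le _ _ |>.trans (by simp)
  · intro hα
    rw [hcard]
    have : (K.neighborFinset v).image (fun w => c s(v, w)) ⊆ ({γ} : Finset ℕ) := by
      intro n hn
      rw [Finset.mem_image] at hn
      obtain ⟨w, hw, rfl⟩ := hn
      have hadj := hK v w ((K.mem_neighborFinset v w).mp hw)
      rcases hadj.2 with h | h
      · exact absurd ⟨w, hadj.1, h⟩ hα
      · simp [h]
    simpa using Finset.card_le_card this
  · intro hγ
    rw [hcard]
    have : (K.neighborFinset v).image (fun w => c s(v, w)) ⊆ ({α} : Finset ℕ) := by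
      intro n hn
      rw [Finset.mem_image] at hn
      obtain ⟨w, hw, rfl⟩ := hn
      have hadj := hK v w ((K.mem_neighborFinset v w).mp hw)
      rcases hadj.2 with h | h
      · simp [h]
      · exact absurd ⟨w, hadj.1, h⟩ hγ
    simpa using Finset.card_le_card this

/-- A connected finite graph with maximum degree ≤ 2 cannot have three distinct
vertices of degree ≤ 1 (pairwise reachable). -/
lemma three_pendant [Fintype V] (K : SimpleGraph V) [DecidableRel K.Adj]
    (hdeg : ∀ v, K.degree v ≤ 2) (a b x : V)
    (hab : a ≠ b) (hax : a ≠ x) (hbx : b ≠ x)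
    (ha : K.degree a ≤ 1) (hb : K.degree b ≤ 1) (hx : K.degree x ≤ 1)
    (hrab : K.Reachable a b) (hrax : K.Reachable a x) : False := by
  classical
  set S : Finset V := Finset.univ.filter (fun v => K.Reachable a v) with hS
  have hmemS : ∀ v, v ∈ S ↔ K.Reachable a v := by
    intro v; simp [hS]
  have haS : a ∈ S := (hmemS a).mpr (SimpleGraph.Reachable.refl a)
  have hbS : b ∈ S := (hmemS b).mpr hrab
  have hxS : x ∈ S := (hmemS x).mpr hrax
  -- the component graph
  set K' : SimpleGraph V :=
    { Adj := fun u v => K.Adj u v ∧ K.Reachable a u ∧ K.Reachable a v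
      symm := by constructor; rintro u v ⟨h1, h2, h3⟩; exact ⟨h1.symm, h3, h2⟩
      loopless := ⟨fun v h => K.loopless.irrefl v h.1⟩ } with hK'
  have hK'adj : ∀ u v, K'.Adj u v ↔ (K.Adj u v ∧ K.Reachable a u ∧ K.Reachable a v) := by
    intro u v; rw [hK']
  -- degrees agree on S
  have hnbr : ∀ v ∈ S, K'.neighborFinset v = K.neighborFinset v := by
    intro v hv
    ext w
    rw [SimpleGraph.mem_neighborFinset, SimpleGraph.mem_neighborFinset, hK'adj]
    constructor
    · exact fun h => h.1
    · intro h
      exact ⟨h, (hmemS v).mp hv, ((hmemS v).mp hv).trans ⟨h.toWalk⟩⟩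
  have hdeg' : ∀ v ∈ S, K'.degree v = K.degree v := by
    intro v hv
    unfold SimpleGraph.degree
    rw [hnbr v hv]
  have hdeg0 : ∀ v, v ∉ S → K'.degree v = 0 := by
    intro v hv
    have hempty : K'.neighborFinset v = ∅ := by
      ext w
      simp only [SimpleGraph.mem_neighborFinset, Finset.notMem_empty, iff_false]
      rintro h
      exact hv ((hmemS v).mpr ((hK'adj v w).mp h).2.1)
    unfold SimpleGraph.degree
    rw [hempty, Finset.card_empty]
  -- handshake
  have hhs : ∑ v, K'.degree v = 2 * K'.edgeFinset.card :=
    K'.sum_degrees_eq_twice_card_edges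
  have h1 : ∑ v ∈ S, K.degree v = 2 * K'.edgeFinset.card := by
    rw [← hhs, ← Finset.sum_subset (Finset.subset_univ S) (fun v _ hv => hdeg0 v hv)]
    exact Finset.sum_congr rfl (fun v hv => (hdeg' v hv).symm)
  -- bound A : degree-sum upper bound
  set T : Finset V := {a, b, x} with hT
  have hTS : T ⊆ S := by
    intro v hv
    rw [hT] at hv
    simp only [Finset.mem_insert, Finset.mem_singleton] at hv
    rcases hv with rfl | rfl | rfl <;> assumption
  have hsumT : ∑ v ∈ T, K.degree v ≤ 3 := by
    rw [hT, Finset.sum_insert (by simp [hab, hax]),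
      Finset.sum_insert (by simp [hbx]), Finset.sum_singleton]
    omega
  have hsumRest : ∑ v ∈ S \ T, K.degree v ≤ (S \ T).card * 2 := by
    calc ∑ v ∈ S \ T, K.degree v ≤ ∑ _v ∈ S \ T, 2 :=
          Finset.sum_le_sum (fun v _ => hdeg v)
      _ = (S \ T).card * 2 := by rw [Finset.sum_const, smul_eq_mul]
  have hsplit : ∑ v ∈ S \ T, K.degree v + ∑ v ∈ T, K.degree v = ∑ v ∈ S, K.degree v :=
    Finset.sum_sdiff hTS
  have hTcard : T.card = 3 := by
    rw [hT]
    rw [Finset.card_insert_of_notMem (by simp [hab, hax]),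
      Finset.card_insert_of_notMem (by simp [hbx]), Finset.card_singleton]
  have hScards : (S \ T).card + T.card = S.card := Finset.card_sdiff_add_card_eq_card hTS
  -- bound B : injection from S.erase a into the edges
  have hstep : ∀ v ∈ S.erase a, ∃ w, K'.Adj v w ∧ K.dist w a < K.dist v a := by
    intro v hv
    rw [Finset.mem_erase] at hv
    have hr : K.Reachable a v := (hmemS v).mp hv.2
    have hrv : K.Reachable v a := hr.symm
    have hd : 0 < K.dist v a := hrv.pos_dist_of_ne hv.1
    obtain ⟨p, hp⟩ := hrv.exists_walk_length_eq_dist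
    have hnil : ¬ p.Nil := by
      rw [SimpleGraph.Walk.not_nil_iff_lt_length]
      omega
    have hadj : K.Adj v (p.getVert 1) := by simpa using p.adj_getVert_succ (i := 0) (by omega)
    refine ⟨p.getVert 1, ⟨hadj, hr, hr.trans ⟨hadj.toWalk⟩⟩, ?_⟩
    have h2 : K.dist (p.getVert 1) a ≤ p.tail.length := SimpleGraph.dist_le _
    have h3 : p.tail.length + 1 = p.length := SimpleGraph.Walk.length_tail_add_one hnil
    omega
  choose wfn hw1 hw2 using hstep
  have hinjcard : (S.erase a).card ≤ K'.edgeFinset.card := by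
    refine Finset.card_le_card_of_injOn
      (fun v => if h : v ∈ S.erase a then s(v, wfn v h) else s(v, v)) ?_ ?_
    · intro v hv
      simp only [dif_pos (Finset.mem_coe.mp hv), Finset.mem_coe, SimpleGraph.mem_edgeFinset, SimpleGraph.mem_edgeSet]
      exact hw1 v (Finset.mem_coe.mp hv)
    · intro v hv v' hv' heq
      replace hv : v ∈ S.erase a := Finset.mem_coe.mp hv
      replace hv' : v' ∈ S.erase a := Finset.mem_coe.mp hv'
      have heq2 : (if h : v ∈ S.erase a then s(v, wfn v h) else s(v, v)) =
          (if h : v' ∈ S.erase a then s(v', wfn v' h) else s(v', v')) := heq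
      rw [dif_pos hv, dif_pos hv'] at heq2
      clear heq
      rename' heq2 => heq
      rcases Sym2.eq_iff.mp heq with ⟨h1, _⟩ | ⟨h1, h2⟩
      · exact h1
      · have d1 := hw2 v hv
        have d2 := hw2 v' hv'
        rw [← h1] at d2
        rw [h2] at d1
        omega
  have herase : (S.erase a).card = S.card - 1 := Finset.card_erase_of_mem haS
  have hScard1 : 1 ≤ S.card := Finset.card_pos.mpr ⟨a, haS⟩
  omega


lemma key {V : Type*} [Fintype V] (G : SimpleGraph V) [DecidableRel G.Adj]
    (hclass2 : chromIndex G = G.maxDegree + 1) (a b : V) (hab : G.Adj a b)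
    (hfd : G.degree a + G.degree b = G.maxDegree + 2)
    (hcrit : chromIndex (G.deleteEdges {s(a, b)}) < chromIndex G) :
    ∀ x, G.Adj a x → x ≠ b → G.degree x = G.maxDegree := by
  classical
  intro x hax hxb
  set Δ := G.maxDegree with hΔ
  set G' := G.deleteEdges {s(a, b)} with hG'
  letI : DecidableRel G'.Adj := Classical.decRel _
  -- G is not Δ-colorable
  have hnotG : ¬ EdgeColorable G Δ := by
    intro h
    have h2 : chromIndex G ≤ Δ := Nat.sInf_le h
    rw [hclass2] at h2
    omega
  -- G' is Δ-colorable
  obtain ⟨c, hc⟩ : EdgeColorable G' Δ := by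
    obtain ⟨n, hn⟩ := edgeColorable_exists G'
    have hne' : {k | EdgeColorable G' k}.Nonempty := ⟨n, hn⟩
    have hmem : EdgeColorable G' (chromIndex G') := Nat.sInf_mem hne'
    have hle : chromIndex G' ≤ Δ := by rw [hclass2] at hcrit; omega
    exact edgeColorable_mono hle hmem
  -- the contradiction machine
  have machine : ∀ c', IsProperEdgeColoring G' Δ c' → ∀ n ∈ Finset.Icc 1 Δ,
      n ∉ pres G' c' a → n ∉ pres G' c' b → False := by
    intro c' hcp n hn hna hnb
    exact hnotG ⟨_, proper_update_of_notMem hab hcp hn hna hnb⟩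
  -- basic adjacency facts
  have hxa : x ≠ a := fun h => G.loopless.irrefl a (h ▸ hax)
  have hbx : b ≠ x := fun h => hxb h.symm
  have hba : b ≠ a := hab.ne'
  have h'ax : G'.Adj a x := by
    rw [hG', SimpleGraph.deleteEdges_adj]
    exact ⟨hax, fun h => hxb (Sym2.congr_right.mp (Set.mem_singleton_iff.mp h))⟩
  -- neighbor finsets in G'
  have hnbrA : G'.neighborFinset a = (G.neighborFinset a).erase b := by
    ext w
    rw [SimpleGraph.mem_neighborFinset, Finset.mem_erase, SimpleGraph.mem_neighborFinset,
      hG', SimpleGraph.deleteEdges_adj]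
    constructor
    · rintro ⟨h1, h2⟩
      exact ⟨fun h => h2 (by rw [h]; rfl), h1⟩
    · rintro ⟨h1, h2⟩
      exact ⟨h2, fun h => h1 (Sym2.congr_right.mp (Set.mem_singleton_iff.mp h))⟩
  have hnbrB : G'.neighborFinset b = (G.neighborFinset b).erase a := by
    ext w
    rw [SimpleGraph.mem_neighborFinset, Finset.mem_erase, SimpleGraph.mem_neighborFinset,
      hG', SimpleGraph.deleteEdges_adj]
    constructor
    · rintro ⟨h1, h2⟩
      refine ⟨fun h => h2 ?_, h1⟩
      rw [Set.mem_singleton_iff, h]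
      exact Sym2.eq_swap
    · rintro ⟨h1, h2⟩
      refine ⟨h2, fun h => ?_⟩
      rw [Set.mem_singleton_iff] at h
      rcases Sym2.eq_iff.mp h with ⟨h3, _⟩ | ⟨_, h4⟩
      · exact hba h3
      · exact h1 h4
  have hnbrX : G'.neighborFinset x = G.neighborFinset x := by
    ext w
    rw [SimpleGraph.mem_neighborFinset, SimpleGraph.mem_neighborFinset, hG',
      SimpleGraph.deleteEdges_adj]
    constructor
    · exact fun h => h.1
    · intro h
      refine ⟨h, fun hmem => ?_⟩
      rw [Set.mem_singleton_iff] at hmem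
      rcases Sym2.eq_iff.mp hmem with ⟨h1, _⟩ | ⟨h1, _⟩
      · exact hxa h1
      · exact hxb h1
  -- present-color finsets
  set A : Finset ℕ := (G'.neighborFinset a).image (fun w => c s(a, w)) with hA
  set B : Finset ℕ := (G'.neighborFinset b).image (fun w => c s(b, w)) with hB
  set X : Finset ℕ := (G'.neighborFinset x).image (fun w => c s(x, w)) with hX
  have hmemA : ∀ n, n ∈ A ↔ n ∈ pres G' c a := by
    intro n
    rw [hA, Finset.mem_image]
    constructor
    · rintro ⟨w, hw, rfl⟩
      exact ⟨w, (G'.mem_neighborFinset a w).mp hw, rfl⟩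
    · rintro ⟨w, hw, rfl⟩
      exact ⟨w, (G'.mem_neighborFinset a w).mpr hw, rfl⟩
  have hmemB : ∀ n, n ∈ B ↔ n ∈ pres G' c b := by
    intro n
    rw [hB, Finset.mem_image]
    constructor
    · rintro ⟨w, hw, rfl⟩
      exact ⟨w, (G'.mem_neighborFinset b w).mp hw, rfl⟩
    · rintro ⟨w, hw, rfl⟩
      exact ⟨w, (G'.mem_neighborFinset b w).mpr hw, rfl⟩
  have hmemX : ∀ n, n ∈ X ↔ n ∈ pres G' c x := by
    intro n
    rw [hX, Finset.mem_image]
    constructor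
    · rintro ⟨w, hw, rfl⟩
      exact ⟨w, (G'.mem_neighborFinset x w).mp hw, rfl⟩
    · rintro ⟨w, hw, rfl⟩
      exact ⟨w, (G'.mem_neighborFinset x w).mpr hw, rfl⟩
  have hinj : ∀ v : V, Set.InjOn (fun w => c s(v, w)) (G'.neighborFinset v : Set V) := by
    intro v
    refine (injOn_color hc v).mono ?_
    intro w hw
    exact (G'.mem_neighborFinset v w).mp (Finset.mem_coe.mp hw)
  have hdegA : 1 ≤ G.degree a := by
    rw [← SimpleGraph.card_neighborFinset_eq_degree]
    exact Finset.card_pos.mpr ⟨b, (G.mem_neighborFinset a b).mpr hab⟩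
  have hdegB : 1 ≤ G.degree b := by
    rw [← SimpleGraph.card_neighborFinset_eq_degree]
    exact Finset.card_pos.mpr ⟨a, (G.mem_neighborFinset b a).mpr hab.symm⟩
  have hcardA : A.card = G.degree a - 1 := by
    rw [hA, Finset.card_image_of_injOn (hinj a), hnbrA,
      Finset.card_erase_of_mem ((G.mem_neighborFinset a b).mpr hab),
      SimpleGraph.card_neighborFinset_eq_degree]
  have hcardB : B.card = G.degree b - 1 := by
    rw [hB, Finset.card_image_of_injOn (hinj b), hnbrB,
      Finset.card_erase_of_mem ((G.mem_neighborFinset b a).mpr hab.symm),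
      SimpleGraph.card_neighborFinset_eq_degree]
  have hcardX : X.card = G.degree x := by
    rw [hX, Finset.card_image_of_injOn (hinj x), hnbrX,
      SimpleGraph.card_neighborFinset_eq_degree]
  -- cover and disjointness
  have hcover : Finset.Icc 1 Δ ⊆ A ∪ B := by
    intro n hn
    by_contra h
    rw [Finset.mem_union, not_or] at h
    exact machine c hc n hn (fun hp => h.1 ((hmemA n).mpr hp))
      (fun hp => h.2 ((hmemB n).mpr hp))
  have hdaΔ : G.degree a ≤ Δ := G.degree_le_maxDegree a
  have hdbΔ : G.degree b ≤ Δ := G.degree_le_maxDegree b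
  have hsumAB : A.card + B.card = Δ := by omega
  have hIccCard : (Finset.Icc 1 Δ).card = Δ := by rw [Nat.card_Icc]; omega
  have hABdisj : A ∩ B = ∅ := by
    have h1 := Finset.card_union_add_card_inter A B
    have h2 : Δ ≤ (A ∪ B).card := by
      rw [← hIccCard]; exact Finset.card_le_card hcover
    have h3 : (A ∪ B).card ≤ A.card + B.card := Finset.card_union_le A B
    have : (A ∩ B).card = 0 := by omega
    exact Finset.card_eq_zero.mp this
  have duality : ∀ n ∈ Finset.Icc 1 Δ, (n ∉ pres G' c a ↔ n ∈ pres G' c b) := by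
    intro n hn
    constructor
    · intro h
      have : n ∈ A ∪ B := hcover hn
      rw [Finset.mem_union] at this
      rcases this with h' | h'
      · exact absurd ((hmemA n).mp h') h
      · exact (hmemB n).mp h'
    · intro h hpa
      have : n ∈ A ∩ B := Finset.mem_inter.mpr ⟨(hmemA n).mpr hpa, (hmemB n).mpr h⟩
      rw [hABdisj] at this
      exact absurd this (Finset.notMem_empty n)
  -- suppose degree x < Δ
  by_contra hne
  have hdxlt : G.degree x < Δ := lt_of_le_of_ne (G.degree_le_maxDegree x) hne
  -- a missing color at x
  obtain ⟨γ, hγI, hγX⟩ : ∃ γ ∈ Finset.Icc 1 Δ, γ ∉ X := by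
    refine Finset.not_subset.mp (fun h => ?_)
    have := Finset.card_le_card h
    omega
  have hγx : γ ∉ pres G' c x := fun h => hγX ((hmemX γ).mpr h)
  -- the color of edge ax
  set β := c s(a, x) with hβ
  have hβI : β ∈ Finset.Icc 1 Δ := hc.1 s(a, x) ((G'.mem_edgeSet).mpr h'ax)
  have hβa : β ∈ pres G' c a := ⟨x, h'ax, rfl⟩
  have hβx : β ∈ pres G' c x := ⟨a, h'ax.symm, by rw [Sym2.eq_swap]⟩
  have hβb : β ∉ pres G' c b := fun h => (duality β hβI).mpr h hβa
  have hβγ : β ≠ γ := fun h => hγx (h ▸ hβx)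
  by_cases hγa : γ ∈ pres G' c a
  · -- γ present at a, hence missing at b; pick α missing at a and run the Kempe argument
    have hγb : γ ∉ pres G' c b := fun h => (duality γ hγI).mpr h hγa
    obtain ⟨α, hαI, hαA⟩ : ∃ α ∈ Finset.Icc 1 Δ, α ∉ A := by
      refine Finset.not_subset.mp (fun h => ?_)
      have := Finset.card_le_card h
      omega
    have hαa : α ∉ pres G' c a := fun h => hαA ((hmemA α).mpr h)
    have hαγ : α ≠ γ := fun h => hαa (h ▸ hγa)
    have hβα : β ≠ α := fun h => hαa (h ▸ hβa)
    set K := kempeGraph G' c α γ with hK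
    letI : DecidableRel K.Adj := Classical.decRel _
    have hKb := degree_bounds hc K (fun u w h => h)
    by_cases hrax : K.Reachable a x
    · by_cases hrab : K.Reachable a b
      · exact three_pendant K (fun v => (hKb v).1) a b x hab.ne hax.ne hbx
          ((hKb a).2.1 hαa) ((hKb b).2.2 hγb) ((hKb x).2.2 hγx) hrab hrax
      · -- swap the component of a ; afterwards γ is missing at both a and b
        obtain ⟨c₃, hc₃, hun, hre, hnr⟩ := kempe_swap G' hc hαγ hαI hγI a
        have h3a : γ ∉ pres G' c₃ a := by
          intro h
          have := (hre a (SimpleGraph.Reachable.refl a) γ).mp h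
          rw [swapC_right hαγ] at this
          exact hαa this
        have h3b : γ ∉ pres G' c₃ b := by
          rw [hnr b hrab]
          exact hγb
        exact machine c₃ hc₃ γ hγI h3a h3b
    · -- swap the component of x ; afterwards α is missing at a and x, recolor ax
      obtain ⟨c₃, hc₃, hun, hre, hnr⟩ := kempe_swap G' hc hαγ hαI hγI x
      have hrxa : ¬ K.Reachable x a := fun h => hrax h.symm
      have h3x : α ∉ pres G' c₃ x := by
        intro h
        have := (hre x (SimpleGraph.Reachable.refl x) α).mp h
        rw [swapC_left] at this
        exact hγx this
      have h3a : α ∉ pres G' c₃ a := by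
        rw [hnr a hrxa]
        exact hαa
      have hβ3 : c₃ s(a, x) = β := hun s(a, x) (fun h => hβα (hβ ▸ h)) (fun h => hβγ (hβ ▸ h))
      have hswapβ : swapC α γ β = β := swapC_other hβα hβγ
      have h3b : β ∉ pres G' c₃ b := by
        by_cases hrb : K.Reachable x b
        · intro h
          apply hβb
          rw [← hswapβ]
          exact (hre b hrb β).mp h
        · rw [hnr b hrb]
          exact hβb
      -- recolor ax with α
      have hc₄ : IsProperEdgeColoring G' Δ (Function.update c₃ s(a, x) α) :=
        proper_update_of_notMem h'ax
          (proper_anti (SimpleGraph.deleteEdges_le _) hc₃) hαI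
          (fun h => h3a (pres_mono (SimpleGraph.deleteEdges_le _) c₃ a h))
          (fun h => h3x (pres_mono (SimpleGraph.deleteEdges_le _) c₃ x h))
      have h4a : β ∉ pres G' (Function.update c₃ s(a, x) α) a := by
        have := old_color_notMem hc₃ h'ax h3a
        rwa [hβ3] at this
      have h4b : β ∉ pres G' (Function.update c₃ s(a, x) α) b := by
        rw [pres_update_of_ne hba hbx]
        exact h3b
      exact machine _ hc₄ β hβI h4a h4b
  · -- γ missing at a and x : recolor ax with γ directly
    have hc₂ : IsProperEdgeColoring G' Δ (Function.update c s(a, x) γ) :=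
      proper_update_of_notMem h'ax
        (proper_anti (SimpleGraph.deleteEdges_le _) hc) hγI
        (fun h => hγa (pres_mono (SimpleGraph.deleteEdges_le _) c a h))
        (fun h => hγx (pres_mono (SimpleGraph.deleteEdges_le _) c x h))
    have h2a : β ∉ pres G' (Function.update c s(a, x) γ) a :=
      old_color_notMem hc h'ax hγa
    have h2b : β ∉ pres G' (Function.update c s(a, x) γ) b := by
      rw [pres_update_of_ne hba hbx]
      exact hβb
    exact machine _ hc₂ β hβI h2a h2b

end Stmt10

/-- if `G` is Class 2 with a full-deficiency pair `(a,b)` whose edge `ab` is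
critical, then every vertex of `(N(a) ∪ N(b)) \ {a,b}` has degree `Δ`. -/
theorem stmt_10 {V : Type*} [Fintype V] (G : SimpleGraph V) [DecidableRel G.Adj]
    (hclass2 : chromIndex G = G.maxDegree + 1) (a b : V) (hab : G.Adj a b)
    (hfd : G.degree a + G.degree b = G.maxDegree + 2)
    (hcrit : chromIndex (G.deleteEdges {s(a, b)}) < chromIndex G) :
    ∀ x, x ∈ G.neighborSet a ∪ G.neighborSet b → x ≠ a → x ≠ b →
      G.degree x = G.maxDegree := by
  intro x hx hxa hxb
  rcases hx with hx | hx
  · exact Stmt10.key G hclass2 a b hab hfd hcrit x hx hxb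
  · have hcrit' : chromIndex (G.deleteEdges {s(b, a)}) < chromIndex G := by
      rwa [Sym2.eq_swap]
    exact Stmt10.key G hclass2 b a hab.symm (by omega) hcrit' x hx hxa
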